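/- Let R be any ring (not necessarily abelian) and n ≥ 1. If R/J(R) is Boolean and every matrix in M_n(J(R)) is nilpotent, then M_n(R) is nil-clean. -/

import Mathlib

/-- A ring is nil-clean if every element is the sum of an idempotent and a nilpotent. -/
def IsNilCleanRing (R : Type*) [Ring R] : Prop :=
  ∀ a : R, ∃ e q : R, IsIdempotentElem e ∧ IsNilpotent q ∧ a = e + q


/-- A ring is Boolean if every element is idempotent. -/
def IsBooleanRing (R : Type*) [Ring R] : Prop := ∀ a : R, a * a = a

open Module

namespace NC

abbrev F2 := ZMod 2

lemma F2.cases (x : F2) : x = 0 ∨ x = 1 := by revert x; decide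

universe u

section EndPart

variable {V : Type*} [AddCommGroup V] [Module F2 V]

lemma addself (x : V) : x + x = 0 := by
  have : ((1 : F2) + 1) = 0 := by decide
  rw [← one_smul F2 x, ← add_smul, this, zero_smul]
lemma negeq (x : V) : -x = x := by rw [neg_eq_iff_add_eq_zero]; exact addself x
lemma subeq (x y : V) : x - y = x + y := by rw [sub_eq_add_neg, negeq]

noncomputable def shiftE {n : ℕ} (c : Basis (Fin n) F2 V) : Module.End F2 V :=
  c.constr F2 (fun i => if h : (i : ℕ) + 1 < n then c ⟨(i : ℕ) + 1, h⟩ else 0)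

lemma shiftE_apply {n : ℕ} (c : Basis (Fin n) F2 V) (i : Fin n) :
    shiftE c (c i) = if h : (i : ℕ) + 1 < n then c ⟨(i : ℕ) + 1, h⟩ else 0 := by
  rw [shiftE, Basis.constr_basis]

lemma shiftE_pow {n : ℕ} (c : Basis (Fin n) F2 V) (m : ℕ) (i : Fin n) :
    ((shiftE c) ^ m) (c i) = if h : (i : ℕ) + m < n then c ⟨(i : ℕ) + m, h⟩ else 0 := by
  induction m generalizing i with
  | zero => simp
  | succ m ih =>
    rw [pow_succ, Module.End.mul_apply, shiftE_apply]
    by_cases h : (i : ℕ) + 1 < n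
    · rw [dif_pos h, ih]
      by_cases h2 : (i : ℕ) + 1 + m < n
      · rw [dif_pos h2, dif_pos (by omega : (i:ℕ) + (m+1) < n)]
        congr 1; apply Fin.ext; simp only [Fin.val_mk]; omega
      · rw [dif_neg h2, dif_neg (by omega : ¬ ((i:ℕ) + (m+1) < n))]
    · rw [dif_neg h, map_zero, dif_neg (by omega : ¬ ((i:ℕ) + (m+1) < n))]

lemma shiftE_pow_n {n : ℕ} (c : Basis (Fin n) F2 V) : (shiftE c) ^ n = 0 := by
  apply c.ext; intro i
  rw [shiftE_pow, dif_neg (by omega)]; simp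

lemma span_orbit_top [FiniteDimensional F2 V] {n : ℕ} (hrank : finrank F2 V = n)
    (S : Module.End F2 V)
    (hinv : ∀ U : Submodule F2 V, (∀ x ∈ U, S x ∈ U) → U = ⊥ ∨ U = ⊤)
    {v : V} (hv : v ≠ 0) :
    ⊤ ≤ Submodule.span F2 (Set.range fun i : Fin n => (S ^ (i : ℕ)) v) := by
  set f : ℕ → V := fun k => (S ^ k) v with hf
  set U : ℕ → Submodule F2 V := fun m => Submodule.span F2 (f '' Set.Iio m) with hU
  have hmono : ∀ m, U m ≤ U (m + 1) := fun m =>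
    Submodule.span_mono (Set.image_mono (fun k hk => lt_trans hk (Nat.lt_succ_self m)))
  have hstab : ∃ m ≤ n, U (m + 1) ≤ U m := by
    by_contra h
    push_neg at h
    have key : ∀ m, m ≤ n + 1 → m ≤ finrank F2 (U m) := by
      intro m
      induction m with
      | zero => omega
      | succ m ih =>
        intro hm
        have hlt : U m < U (m + 1) := lt_of_le_not_ge (hmono m) (h m (by omega))
        have := Submodule.finrank_lt_finrank_of_lt hlt
        have := ih (by omega)
        omega
    have h1 := key (n + 1) le_rfl
    have h2 : finrank F2 (U (n + 1)) ≤ finrank F2 V := Submodule.finrank_le _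
    omega
  obtain ⟨m, hmn, hst⟩ := hstab
  have hinvU : ∀ x ∈ U m, S x ∈ U m := by
    intro x hx
    have hmem : S x ∈ Submodule.map S (U m) := Submodule.mem_map_of_mem hx
    rw [hU, Submodule.map_span] at hmem
    refine hst (Submodule.span_le.mpr ?_ hmem)
    rintro _ ⟨_, ⟨k, hk, rfl⟩, rfl⟩
    have : S (f k) = f (k + 1) := by
      rw [hf]; simp only []; rw [pow_succ', Module.End.mul_apply]
    rw [this]
    exact Submodule.subset_span ⟨k + 1, by simpa using Nat.add_lt_add_right hk 1, rfl⟩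
  rcases hinv (U m) hinvU with hbot | htop
  · exfalso
    have hvmem : v ∈ U (m + 1) := Submodule.subset_span ⟨0, by simp, by simp [hf]⟩
    rw [hbot] at hst
    have := hst hvmem
    simp at this
    exact hv this
  · rw [← htop]
    apply Submodule.span_mono
    rintro _ ⟨k, hk, rfl⟩
    exact ⟨⟨k, lt_of_lt_of_le hk hmn⟩, rfl⟩

lemma companion_case {n : ℕ} [FiniteDimensional F2 V] (hn : 0 < n)
    (hrank : finrank F2 V = n) (T : Module.End F2 V)
    (hinv : ∀ U : Submodule F2 V, (∀ x ∈ U, T x ∈ U) → U = ⊥ ∨ U = ⊤) :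
    ∃ E N : Module.End F2 V, IsIdempotentElem E ∧ N ^ n = 0 ∧ T = E + N := by
  have hnt : Nontrivial V := by
    apply Module.nontrivial_of_finrank_pos (R := F2); omega
  obtain ⟨v, hv⟩ := exists_ne (0 : V)
  set S : Module.End F2 V := T + 1 with hS
  have hinvS : ∀ U : Submodule F2 V, (∀ x ∈ U, S x ∈ U) → U = ⊥ ∨ U = ⊤ := by
    intro U hU
    apply hinv
    intro x hx
    have h1 : T x = S x - x := by simp [hS]
    rw [h1]
    exact sub_mem (hU x hx) hx
  have hspan := span_orbit_top hrank S hinvS hv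
  set bb : ℕ → V := fun k => (S ^ k) v with hbbdef
  have hcard : Fintype.card (Fin n) = finrank F2 V := by simp [hrank]
  set b : Basis (Fin n) F2 V := basisOfTopLeSpanOfCardEqFinrank _ hspan hcard with hbdef
  have hb : ∀ i : Fin n, b i = bb (i : ℕ) := by
    intro i
    rw [hbdef]
    rw [show ⇑(basisOfTopLeSpanOfCardEqFinrank _ hspan hcard)
      = (fun i : Fin n => (S ^ (i : ℕ)) v) from coe_basisOfTopLeSpanOfCardEqFinrank _ _ _]
  have hSbb : ∀ k : ℕ, S (bb k) = bb (k + 1) := by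
    intro k; rw [hbbdef]; simp only []; rw [pow_succ', Module.End.mul_apply]
  have hTbb : ∀ k : ℕ, T (bb k) = bb (k + 1) + bb k := by
    intro k
    have : T (bb k) = S (bb k) - bb k := by simp [hS]
    rw [this, hSbb, subeq]
  set lst : Fin n := ⟨n - 1, by omega⟩ with hlst
  set a : Fin n → F2 := fun k => b.repr (bb n) k with ha
  have hA : bb n = ∑ k : Fin n, a k • b k := (b.sum_repr (bb n)).symm
  have hblst : b lst = bb (n - 1) := by rw [hb]
  have hvlst : (lst : ℕ) = n - 1 := rfl
  have hlsteq : ∀ k : Fin n, ¬ ((k : ℕ) < n - 1) → k = lst := by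
    intro k hk
    apply Fin.ext
    rw [hvlst]
    have := k.isLt
    omega
  by_cases hcase : a lst = 1 ∨ ∀ k : Fin n, (k : ℕ) < n - 1 → a k = 0
  · -- CASE A
    set N : Module.End F2 V := shiftE b with hN
    refine ⟨T - N, N, ?_, shiftE_pow_n b, by abel⟩
    have hElt : ∀ i : Fin n, (i : ℕ) < n - 1 → (T - N) (b i) = b i := by
      intro i hi
      rw [LinearMap.sub_apply, hN, shiftE_apply, dif_pos (by omega : (i:ℕ)+1 < n)]
      rw [hb i, hTbb, show b ⟨(i:ℕ)+1, by omega⟩ = bb ((i:ℕ)+1) from hb _]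
      abel
    have hElst : (T - N) (b lst) = b lst + bb n := by
      rw [LinearMap.sub_apply, hN, shiftE_apply, dif_neg (by rw [hvlst]; omega)]
      rw [hblst, hTbb, show n - 1 + 1 = n by omega, sub_zero, ← hblst]
      abel
    have hEbk : ∀ k : Fin n, (T - N) (b k) = b k + (if k = lst then bb n else 0) := by
      intro k
      by_cases hk : (k : ℕ) < n - 1
      · rw [hElt k hk, if_neg, add_zero]
        intro he; rw [he, hvlst] at hk; omega
      · rw [hlsteq k hk, hElst, if_pos rfl]
    have hEbn : (T - N) (bb n) = bb n + a lst • bb n := by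
      conv_lhs => rw [hA]
      rw [map_sum]
      have hterm : ∀ k : Fin n, (T - N) (a k • b k)
          = a k • b k + (if k = lst then a k • bb n else 0) := by
        intro k
        rw [map_smul, hEbk, smul_add]
        congr 1
        by_cases hk : k = lst <;> simp [hk]
      rw [Finset.sum_congr rfl (fun k _ => hterm k), Finset.sum_add_distrib]
      rw [Finset.sum_ite_eq' Finset.univ lst (fun k => a k • bb n)]
      simp [← hA]
    apply Basis.ext b
    intro i
    rw [Module.End.mul_apply]
    by_cases hi : (i : ℕ) < n - 1
    · rw [hElt i hi, hElt i hi]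
    · rw [hlsteq i hi, hElst, map_add, hElst, hEbn]
      have hgoal : a lst • bb n = bb n := by
        rcases F2.cases (a lst) with h0 | h1
        · have h2 : ∀ k : Fin n, (k : ℕ) < n - 1 → a k = 0 := by
            rcases hcase with h1 | h2
            · rw [h0] at h1; exact absurd h1 (by decide)
            · exact h2
          have hz : bb n = 0 := by
            rw [hA]; apply Finset.sum_eq_zero; intro k _
            by_cases hk : (k:ℕ) < n - 1
            · rw [h2 k hk, zero_smul]
            · rw [hlsteq k hk, h0, zero_smul]
          rw [hz, smul_zero]
        · rw [h1, one_smul]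
      rw [hgoal, addself, add_zero]
  · -- CASE B
    push_neg at hcase
    obtain ⟨halst, k₀, hk₀lt, hk₀ne⟩ := hcase
    have halst0 : a lst = 0 := by
      rcases F2.cases (a lst) with h | h
      · exact h
      · exact absurd h halst
    set jf : Finset (Fin n) := Finset.univ.filter (fun k => (k : ℕ) < n - 1 ∧ a k ≠ 0) with hjf
    have hjfne : jf.Nonempty := ⟨k₀, by simp [hjf, hk₀lt, hk₀ne]⟩
    set j : Fin n := jf.max' hjfne with hj
    have hjmem : j ∈ jf := jf.max'_mem hjfne
    have hjlt : (j : ℕ) < n - 1 := (Finset.mem_filter.mp hjmem).2.1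
    have haj : a j = 1 := by
      have hne := (Finset.mem_filter.mp hjmem).2.2
      rcases F2.cases (a j) with h | h
      · exact absurd h hne
      · exact h
    have hagt : ∀ k : Fin n, (j : ℕ) < (k : ℕ) → a k = 0 := by
      intro k hk
      by_cases hk2 : (k : ℕ) < n - 1
      · by_contra hne
        have hmem : k ∈ jf := by simp [hjf, hk2, hne]
        have hle := Fin.le_def.mp (jf.le_max' k hmem)
        rw [← hj] at hle
        omega
      · rw [hlsteq k hk2]; exact halst0
    have hn2 : 2 ≤ n := by omega
    set cc : ℕ → V := fun k => if k ≤ (j : ℕ) then bb k else T (bb (k - 1)) with hcc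
    have hccle : ∀ k : ℕ, k ≤ (j : ℕ) → cc k = bb k := fun k hk => if_pos hk
    have hccgt : ∀ k : ℕ, (j : ℕ) < k → cc k = bb k + bb (k - 1) := by
      intro k hk
      rw [hcc]
      simp only []
      rw [if_neg (by omega), hTbb, show k - 1 + 1 = k by omega]
    have hbbmem : ∀ k : ℕ, k < n →
        bb k ∈ Submodule.span F2 (Set.range fun i : Fin n => cc (i : ℕ)) := by
      intro k
      induction k using Nat.strong_induction_on with
      | _ k ih =>
        intro hkn
        by_cases hk : k ≤ (j : ℕ)
        · rw [← hccle k hk]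
          exact Submodule.subset_span ⟨⟨k, hkn⟩, rfl⟩
        · push_neg at hk
          have h1 : bb k = cc k + bb (k - 1) := by
            rw [hccgt k hk, add_assoc, addself, add_zero]
          rw [h1]
          exact Submodule.add_mem _ (Submodule.subset_span ⟨⟨k, hkn⟩, rfl⟩)
            (ih (k - 1) (by omega) (by omega))
    have hspanc : ⊤ ≤ Submodule.span F2 (Set.range fun i : Fin n => cc (i : ℕ)) := by
      refine le_trans hspan (Submodule.span_le.mpr ?_)
      rintro _ ⟨i, rfl⟩
      exact hbbmem i i.isLt
    set c : Basis (Fin n) F2 V := basisOfTopLeSpanOfCardEqFinrank _ hspanc hcard with hcdef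
    have hcb : ∀ i : Fin n, c i = cc (i : ℕ) := by
      intro i
      rw [hcdef, show ⇑(basisOfTopLeSpanOfCardEqFinrank _ hspanc hcard)
        = (fun i : Fin n => cc (i : ℕ)) from coe_basisOfTopLeSpanOfCardEqFinrank _ _ _]
    set N : Module.End F2 V := shiftE c with hN
    refine ⟨T - N, N, ?_, shiftE_pow_n c, by abel⟩
    have hNc : ∀ k : ℕ, k + 1 < n → N (cc k) = cc (k + 1) := by
      intro k hk
      have h1 : c ⟨k, by omega⟩ = cc k := hcb _
      rw [← h1, hN, shiftE_apply, dif_pos (show ((⟨k, by omega⟩ : Fin n) : ℕ) + 1 < n from hk)]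
      exact hcb ⟨k + 1, hk⟩
    have hNtop : N (cc (n - 1)) = 0 := by
      have h1 : c lst = cc (n - 1) := by rw [hcb, hvlst]
      rw [← h1, hN, shiftE_apply, dif_neg (by rw [hvlst]; omega)]
    have hEclt : ∀ k : ℕ, k < (j : ℕ) → (T - N) (cc k) = cc k := by
      intro k hk
      rw [LinearMap.sub_apply, hNc k (by omega), hccle k (by omega), hccle (k+1) (by omega), hTbb]
      abel
    have hEcj : (T - N) (cc (j : ℕ)) = 0 := by
      rw [LinearMap.sub_apply, hNc (j : ℕ) (by omega), hccle (j : ℕ) le_rfl]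
      rw [hccgt ((j : ℕ) + 1) (by omega), show (j : ℕ) + 1 - 1 = (j : ℕ) by omega, hTbb]
      abel
    have hEcmid : ∀ k : ℕ, (j : ℕ) < k → k < n - 1 → (T - N) (cc k) = cc k := by
      intro k hk1 hk2
      rw [LinearMap.sub_apply, hNc k (by omega), hccgt k hk1, hccgt (k+1) (by omega)]
      rw [show k + 1 - 1 = k by omega, map_add, hTbb, hTbb, show k - 1 + 1 = k by omega]
      rw [subeq]
      have e1 : bb (k+1) + bb k + (bb k + bb (k-1)) + (bb (k+1) + bb k)
          = bb k + bb (k-1) + (bb (k+1) + bb (k+1)) + (bb k + bb k) := by abel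
      rw [e1, addself, addself, add_zero, add_zero]
    have hEtop : (T - N) (cc (n - 1)) = bb n + bb (n - 2) := by
      rw [LinearMap.sub_apply, hNtop, sub_zero, hccgt (n-1) (by omega), map_add, hTbb, hTbb]
      rw [show n - 1 + 1 = n by omega, show n - 1 - 1 = n - 2 by omega, show n - 2 + 1 = n - 1 by omega]
      have e1 : bb n + bb (n-1) + (bb (n-1) + bb (n-2))
          = bb n + bb (n-2) + (bb (n-1) + bb (n-1)) := by abel
      rw [e1, addself, add_zero]
    have hEbbj : (T - N) (bb (j : ℕ)) = 0 := by rw [← hccle (j : ℕ) le_rfl]; exact hEcj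
    have hEbbmid : ∀ k : ℕ, (j : ℕ) ≤ k → k ≤ n - 2 → (T - N) (bb k) = bb k + bb (j : ℕ) := by
      intro k hk1
      induction k, hk1 using Nat.le_induction with
      | base =>
        intro _
        rw [hEbbj, addself]
      | succ k hk ih =>
        intro hk2
        have h1 : bb (k + 1) = cc (k + 1) + bb k := by
          rw [hccgt (k+1) (by omega), show k + 1 - 1 = k by omega, add_assoc, addself, add_zero]
        rw [h1, map_add, hEcmid (k+1) (by omega) (by omega), ih (by omega)]
        abel
    have hEbbn : (T - N) (bb n) = bb n + bb (j : ℕ) := by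
      conv_lhs => rw [hA]
      rw [map_sum]
      have hterm : ∀ k : Fin n, (T - N) (a k • b k)
          = a k • b k + (if k = j then bb (j : ℕ) else 0) := by
        intro k
        rcases lt_trichotomy (k : ℕ) (j : ℕ) with hlt | heq | hgt
        · rw [map_smul, hb k, ← hccle (k : ℕ) (by omega), hEclt (k : ℕ) hlt]
          rw [if_neg (by intro hkj; rw [hkj] at hlt; omega), add_zero, hccle (k : ℕ) (by omega)]
        · have hkj : k = j := Fin.ext heq
          rw [hkj, haj, one_smul, hb j, hEbbj, if_pos rfl, addself]
        · rw [hagt k hgt, zero_smul, map_zero, zero_add]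
          rw [if_neg (by intro hkj; rw [hkj] at hgt; omega)]
      rw [Finset.sum_congr rfl (fun k _ => hterm k), Finset.sum_add_distrib]
      rw [Finset.sum_ite_eq' Finset.univ j (fun _ => bb (j : ℕ))]
      simp [← hA]
    apply Basis.ext c
    intro i
    rw [Module.End.mul_apply, hcb i]
    rcases lt_trichotomy ((i : ℕ)) ((j : ℕ)) with hlt | heq | hgt
    · rw [hEclt _ hlt, hEclt _ hlt]
    · rw [heq, hEcj, map_zero]
    · by_cases hi : (i : ℕ) < n - 1
      · rw [hEcmid _ hgt hi, hEcmid _ hgt hi]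
      · have : (i : ℕ) = n - 1 := by have := i.isLt; omega
        rw [this, hEtop, map_add, hEbbn, hEbbmid (n - 2) (by omega) le_rfl]
        have e1 : bb n + bb (j:ℕ) + (bb (n-2) + bb (j:ℕ))
            = bb n + bb (n-2) + (bb (j:ℕ) + bb (j:ℕ)) := by abel
        rw [e1, addself, add_zero]

lemma glue [FiniteDimensional F2 V] (T : Module.End F2 V) (W : Submodule F2 V)
    (hW : ∀ x ∈ W, T x ∈ W) {p q : ℕ}
    (h1 : ∃ E N : Module.End F2 W, IsIdempotentElem E ∧ N ^ q = 0 ∧ T.restrict hW = E + N)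
    (h2 : ∃ E N : Module.End F2 (V ⧸ W), IsIdempotentElem E ∧ N ^ p = 0 ∧
      Submodule.mapQ W W T (fun x hx => hW x hx) = E + N) :
    ∃ E N : Module.End F2 V, IsIdempotentElem E ∧ N ^ (p + q) = 0 ∧ T = E + N := by
  obtain ⟨E₁, N₁, hE₁, hN₁, hT₁⟩ := h1
  obtain ⟨E₂, N₂, hE₂, hN₂, hT₂⟩ := h2
  obtain ⟨U, hU⟩ := Submodule.exists_isCompl W
  set pr : V →ₗ[F2] W := Submodule.linearProjOfIsCompl W U hU with hprdef
  set σ : (V ⧸ W) →ₗ[F2] V :=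
    U.subtype ∘ₗ (Submodule.quotientEquivOfIsCompl W U hU).toLinearMap with hσdef
  set π : V →ₗ[F2] V ⧸ W := W.mkQ with hπdef
  have hπσ : ∀ y, π (σ y) = y := by
    intro y
    rw [hσdef, hπdef]
    simp
    exact Submodule.mk_quotientEquivOfIsCompl_apply hU y
  have hπW : ∀ w : W, π (w : V) = 0 := by
    intro w
    rw [hπdef]
    simp [Submodule.Quotient.mk_eq_zero]
  have hprW : ∀ w : W, pr (w : V) = w := fun w =>
    Submodule.linearProjOfIsCompl_apply_left hU w
  have hprσ : ∀ y, pr (σ y) = 0 := by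
    intro y
    rw [hσdef, hprdef]
    simp only [LinearMap.comp_apply, LinearEquiv.coe_coe, Submodule.coe_subtype]
    exact Submodule.linearProjOfIsCompl_apply_right hU _
  have hπT : ∀ x, π (T x) = Submodule.mapQ W W T (fun x hx => hW x hx) (π x) := by
    intro x
    rw [hπdef]
    simp [Submodule.mapQ_apply]
  set E : Module.End F2 V := W.subtype ∘ₗ E₁ ∘ₗ pr + σ ∘ₗ E₂ ∘ₗ π with hEdef
  have hEapp : ∀ x, E x = ↑(E₁ (pr x)) + σ (E₂ (π x)) := fun x => rfl
  have hE₁' : ∀ y, E₁ (E₁ y) = E₁ y := by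
    intro y
    have := DFunLike.congr_fun hE₁ y
    rwa [Module.End.mul_apply] at this
  have hE₂' : ∀ y, E₂ (E₂ y) = E₂ y := by
    intro y
    have := DFunLike.congr_fun hE₂ y
    rwa [Module.End.mul_apply] at this
  have hπE : ∀ x, π (E x) = E₂ (π x) := by
    intro x
    rw [hEapp, map_add, hπW, hπσ, zero_add]
  have hprE : ∀ x, pr (E x) = E₁ (pr x) := by
    intro x
    rw [hEapp, map_add, hprW, hprσ, add_zero]
  have hidem : IsIdempotentElem E := by
    apply LinearMap.ext
    intro x
    rw [Module.End.mul_apply, hEapp (E x), hπE, hprE, hE₁', hE₂', hEapp]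
  set N : Module.End F2 V := T - E with hNdef
  refine ⟨E, N, hidem, ?_, by rw [hNdef]; abel⟩
  have hπN : ∀ x, π (N x) = N₂ (π x) := by
    intro x
    rw [hNdef]
    simp only [LinearMap.sub_apply]
    rw [map_sub, hπT, hπE, hT₂, LinearMap.add_apply]
    abel
  have hπNpow : ∀ m x, π ((N ^ m) x) = (N₂ ^ m) (π x) := by
    intro m
    induction m with
    | zero => intro x; simp
    | succ m ih =>
      intro x
      rw [pow_succ', pow_succ', Module.End.mul_apply, Module.End.mul_apply, hπN, ih]
  have hNW : ∀ w : W, N (w : V) = ↑(N₁ w) := by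
    intro w
    have hrestr : T (w : V) = ↑(T.restrict hW w) := by
      rw [LinearMap.restrict_apply]
    have hN₁w : N₁ w = T.restrict hW w - E₁ w := by rw [hT₁]; simp
    rw [hNdef]
    simp only [LinearMap.sub_apply]
    rw [hEapp, hπW, map_zero, map_zero, add_zero, hprW, hrestr, hN₁w]
    push_cast
    ring
  have hNpowW : ∀ m (w : W), ((N ^ m) (w : V)) = ↑((N₁ ^ m) w) := by
    intro m
    induction m with
    | zero => intro w; simp
    | succ m ih =>
      intro w
      rw [pow_succ, pow_succ, Module.End.mul_apply, Module.End.mul_apply, hNW, ih]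
  apply LinearMap.ext
  intro x
  rw [add_comm, pow_add, Module.End.mul_apply]
  have hmem : (N ^ p) x ∈ W := by
    rw [← Submodule.Quotient.mk_eq_zero W, ← Submodule.mkQ_apply, ← hπdef, hπNpow, hN₂]
    simp
  have := hNpowW q ⟨(N ^ p) x, hmem⟩
  simp only [Submodule.coe_mk] at this
  rw [this, hN₁]
  simp

theorem end_nilclean_aux : ∀ (d : ℕ) (V : Type u) [AddCommGroup V] [Module F2 V]
    [FiniteDimensional F2 V], finrank F2 V = d →
    ∀ T : Module.End F2 V, ∃ E N : Module.End F2 V,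
      IsIdempotentElem E ∧ N ^ d = 0 ∧ T = E + N := by
  intro d
  induction d using Nat.strong_induction_on with
  | _ d ih =>
    intro V _ _ _ hrank T
    by_cases hd : d = 0
    · subst hd
      have hsub : Subsingleton V := by
        rw [← Module.finrank_zero_iff (R := F2)]
        omega
      have hsubE : Subsingleton (Module.End F2 V) := by infer_instance
      exact ⟨0, 0, Subsingleton.elim _ _, Subsingleton.elim _ _, Subsingleton.elim _ _⟩
    · by_cases hex : ∃ W : Submodule F2 V, (∀ x ∈ W, T x ∈ W) ∧ W ≠ ⊥ ∧ W ≠ ⊤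
      · obtain ⟨W, hWinv, hWbot, hWtop⟩ := hex
        have hq := Submodule.finrank_quotient_add_finrank W
        have hWle : finrank F2 W < d := by
          have := Submodule.finrank_lt (K := F2) (V := V) hWtop
          omega
        have hWpos : 0 < finrank F2 W := by
          have : Nontrivial W := Submodule.nontrivial_iff_ne_bot.mpr hWbot
          exact Module.finrank_pos
        have hQlt : finrank F2 (V ⧸ W) < d := by omega
        have h1 := ih _ hWle W rfl (T.restrict hWinv)
        have h2 := ih _ hQlt (V ⧸ W) rfl (Submodule.mapQ W W T (fun x hx => hWinv x hx))
        have hg := glue T W hWinv h1 h2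
        rw [show finrank F2 (V ⧸ W) + finrank F2 W = d by omega] at hg
        exact hg
      · push_neg at hex
        refine companion_case (by omega) hrank T ?_
        intro U hU
        by_cases hbot : U = ⊥
        · exact Or.inl hbot
        · exact Or.inr (hex U hU hbot)

theorem matrix_zmod2_nilclean (n : ℕ) (A : Matrix (Fin n) (Fin n) F2) :
    ∃ E Q : Matrix (Fin n) (Fin n) F2, IsIdempotentElem E ∧ Q ^ n = 0 ∧ A = E + Q := by
  set e := Matrix.toLinAlgEquiv' (n := Fin n) (R := F2) with he
  have hrank : finrank F2 (Fin n → F2) = n := Module.finrank_fin_fun F2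
  obtain ⟨E, N, hE, hN, hT⟩ := end_nilclean_aux n (Fin n → F2) hrank (e A)
  refine ⟨e.symm E, e.symm N, ?_, ?_, ?_⟩
  · show e.symm E * e.symm E = e.symm E
    rw [← map_mul, hE]
  · rw [← map_pow, hN, map_zero]
  · rw [← map_add, ← hT, AlgEquiv.symm_apply_apply]

end EndPart

section Bool
variable {B : Type*} [Ring B] (hB : ∀ a : B, a * a = a)
include hB

lemma bool_addmul (a b : B) : a * b + b * a = 0 := by
  have h := hB (a + b)
  have key : a * b + b * a + (a + b) = 0 + (a + b) := by
    calc a * b + b * a + (a + b)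
        = a * a + a * b + (b * a + b * b) := by rw [hB a, hB b]; abel
      _ = (a + b) * (a + b) := by noncomm_ring
      _ = a + b := h
      _ = 0 + (a + b) := by rw [zero_add]
  exact add_right_cancel key

lemma bool_addself (a : B) : a + a = 0 := by
  have := bool_addmul hB a a
  rwa [hB a] at this

lemma bool_neg (a : B) : -a = a := by
  rw [neg_eq_iff_add_eq_zero]; exact bool_addself hB a

lemma bool_comm (a b : B) : a * b = b * a := by
  have h := bool_addmul hB a b
  have h2 : a * b = -(b * a) := eq_neg_of_add_eq_zero_left h
  rw [h2, bool_neg hB]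

lemma bool_one_one : (1 : B) + 1 = 0 := bool_addself hB 1

end Bool

/-- The unique ring hom from `ZMod 2` to a ring with `1 + 1 = 0`. -/
noncomputable def f2hom (B : Type*) [Ring B] (h2 : (1 : B) + 1 = 0) : ZMod 2 →+* B where
  toFun := fun x => if x = 0 then 0 else 1
  map_one' := by norm_num
  map_mul' := by
    have hc : ∀ z : ZMod 2, z = 0 ∨ z = 1 := by decide
    intro x y
    rcases hc x with hx | hx <;> rcases hc y with hy | hy <;> subst hx <;> subst hy <;> simp
  map_zero' := by norm_num
  map_add' := by
    have hc : ∀ z : ZMod 2, z = 0 ∨ z = 1 := by decide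
    intro x y
    rcases hc x with hx | hx <;> rcases hc y with hy | hy <;> subst hx <;> subst hy <;>
      simp [h2, show ((1 : ZMod 2) + 1 = 0) from by decide]

theorem boolean_matrix_nilclean {B : Type*} [Ring B] (hB : ∀ a : B, a * a = a)
    {n : ℕ} (hn : 0 < n) (A : Matrix (Fin n) (Fin n) B) :
    ∃ E Q : Matrix (Fin n) (Fin n) B, IsIdempotentElem E ∧ Q ^ n = 0 ∧ A = E + Q := by
  classical
  letI : CommRing B := { (inferInstance : Ring B) with mul_comm := bool_comm hB }
  set φ : ZMod 2 →+* B := f2hom B (bool_one_one hB) with hφ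
  -- chosen decompositions over ZMod 2
  have hex : ∀ A₀ : Matrix (Fin n) (Fin n) F2,
      ∃ E₀, IsIdempotentElem E₀ ∧ (A₀ - E₀) ^ n = 0 := by
    intro A₀
    obtain ⟨E₀, Q₀, hE₀, hQ₀, hA₀⟩ := matrix_zmod2_nilclean n A₀
    exact ⟨E₀, hE₀, by rw [hA₀, add_sub_cancel_left, hQ₀]⟩
  choose Efn hEfn hQfn using hex
  set K := Fintype.card (Matrix (Fin n) (Fin n) F2) with hK
  set eqv : Matrix (Fin n) (Fin n) F2 ≃ Fin K := Fintype.equivFin _ with heqv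
  set idx : ℕ → Matrix (Fin n) (Fin n) F2 :=
    fun k => if h : k < K then eqv.symm ⟨k, h⟩ else 0 with hidx
  set D : Matrix (Fin n) (Fin n) F2 → Matrix (Fin n) (Fin n) B :=
    fun A₀ => (A - (φ.mapMatrix (Efn A₀))) ^ n with hD
  set ε : Matrix (Fin n) (Fin n) F2 → B :=
    fun A₀ => ∏ p : Fin n × Fin n, (1 - D A₀ p.1 p.2) with hε
  have hεD : ∀ A₀ i j, ε A₀ * D A₀ i j = 0 := by
    intro A₀ i j
    have hsplit : ε A₀ = (∏ q ∈ Finset.univ.erase (i, j), (1 - D A₀ q.1 q.2))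
        * (1 - D A₀ i j) := by
      rw [hε]
      exact (Finset.prod_erase_mul Finset.univ _ (Finset.mem_univ (i, j))).symm
    rw [hsplit, mul_assoc]
    have : (1 - D A₀ i j) * D A₀ i j = 0 := by
      have := hB (D A₀ i j)
      rw [sub_mul, one_mul, this, sub_self]
    rw [this, mul_zero]
  set ε' : ℕ → B := fun k => if k < K then ε (idx k) else 0 with hε'
  set g : ℕ → B := fun k => ε' k * ∏ i ∈ Finset.range k, (1 - ε' i) with hg
  have hsum : ∀ m, (∏ i ∈ Finset.range m, (1 - ε' i)) + ∑ k ∈ Finset.range m, g k = 1 := by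
    intro m
    induction m with
    | zero => simp
    | succ m ih =>
      rw [Finset.prod_range_succ, Finset.sum_range_succ, hg]
      simp only []
      linear_combination ih
  set z : B := ∏ i ∈ Finset.range K, (1 - ε' i) with hzdef
  have hzmem : ∀ J : Ideal B, J.IsPrime → z ∈ J := by
    intro J hJ
    haveI : J.IsPrime := hJ
    set π : B →+* B ⧸ J := Ideal.Quotient.mk J with hπ
    have h01 : ∀ x : B ⧸ J, x = 0 ∨ x = 1 := by
      intro x
      obtain ⟨b, rfl⟩ := Ideal.Quotient.mk_surjective x
      have hx : (π b) * (π b) = π b := by rw [← map_mul, hB b]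
      have hfac : (π b) * (π b - 1) = 0 := by rw [mul_sub, hx, mul_one, sub_self]
      rcases mul_eq_zero.mp hfac with h | h
      · exact Or.inl h
      · exact Or.inr (by rwa [sub_eq_zero] at h)
    set A₀ : Matrix (Fin n) (Fin n) F2 :=
      Matrix.of (fun i j => if π (A i j) = 0 then 0 else 1) with hA₀
    set ψ : ZMod 2 →+* B ⧸ J := π.comp φ with hψ
    have hψ0 : ψ 0 = 0 := map_zero ψ
    have hψ1 : ψ 1 = 1 := map_one ψ
    have hcomp : ∀ i j, π (A i j) = ψ (A₀ i j) := by
      intro i j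
      by_cases h : π (A i j) = 0
      · rw [h, hA₀]
        simp only [Matrix.of_apply, if_pos h]
        rw [hψ0]
      · have h1 : π (A i j) = 1 := (h01 _).resolve_left h
        rw [h1, hA₀]
        simp only [Matrix.of_apply, if_neg h]
        rw [hψ1]
    have hπD : ∀ i j, π (D A₀ i j) = 0 := by
      intro i j
      have key : (π.mapMatrix) (D A₀) = 0 := by
        rw [hD]
        simp only []
        rw [map_pow]
        have hmm : π.mapMatrix (A - φ.mapMatrix (Efn A₀)) = ψ.mapMatrix (A₀ - Efn A₀) := by
          ext i' j'
          simp only [RingHom.mapMatrix_apply, Matrix.map_apply, Matrix.sub_apply]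
          rw [map_sub, hcomp, map_sub ψ]
          rfl
        rw [hmm, ← map_pow, hQfn, map_zero]
      calc π (D A₀ i j) = (π.mapMatrix (D A₀)) i j := rfl
        _ = 0 := by rw [key]; rfl
    have hπε : π (ε A₀) = 1 := by
      rw [hε]
      simp only []
      rw [map_prod]
      rw [Finset.prod_congr rfl (fun p _ => by
        rw [map_sub, map_one, hπD p.1 p.2, sub_zero])]
      simp
    set k₀ : Fin K := eqv A₀ with hk₀
    have hidxk₀ : idx (k₀ : ℕ) = A₀ := by
      rw [hidx]
      simp only []
      rw [dif_pos k₀.isLt, Fin.eta, hk₀, Equiv.symm_apply_apply]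
    have hfac : (1 - ε' (k₀ : ℕ)) ∈ J := by
      rw [← Ideal.Quotient.eq_zero_iff_mem]
      have hεk : ε' (k₀ : ℕ) = ε A₀ := by
        rw [hε']
        simp only []
        rw [if_pos k₀.isLt, hidxk₀]
      show π (1 - ε' (k₀ : ℕ)) = 0
      rw [map_sub, map_one, hεk, hπε, sub_self]
    have hzfac : z = (1 - ε' (k₀ : ℕ)) * ∏ i ∈ (Finset.range K).erase (k₀ : ℕ), (1 - ε' i) := by
      rw [hzdef]
      exact (Finset.mul_prod_erase _ _ (Finset.mem_range.mpr k₀.isLt)).symm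
    rw [hzfac]
    exact Ideal.mul_mem_right _ J hfac
  have hznil : IsNilpotent z := by
    rw [← mem_nilradical, nilradical_eq_sInf, Submodule.mem_sInf]
    intro J hJ
    exact hzmem J hJ
  have hz0 : z = 0 := by
    obtain ⟨m, hm⟩ := hznil
    cases m with
    | zero =>
      rw [pow_zero] at hm
      calc z = z * 1 := (mul_one z).symm
        _ = z * 0 := by rw [hm]
        _ = 0 := mul_zero z
    | succ m =>
      have hp : z ^ (m + 1) = z := IsIdempotentElem.pow_succ_eq m (hB z)
      rw [← hp, hm]
  have hsum1 : ∑ k ∈ Finset.range K, g k = 1 := by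
    have h := hsum K
    rw [← hzdef, hz0, zero_add] at h
    exact h
  set MB : ℕ → Matrix (Fin n) (Fin n) B := fun k => φ.mapMatrix (Efn (idx k)) with hMB
  have hMBidem : ∀ k, MB k * MB k = MB k := by
    intro k
    rw [hMB]
    simp only []
    rw [← map_mul, hEfn (idx k)]
  have horth : ∀ k l, k ≠ l → g k * g l = 0 := by
    have haux : ∀ k l, k < l → g k * g l = 0 := by
      intro k l h
      have hsplit : ∏ i ∈ Finset.range l, (1 - ε' i)
          = (1 - ε' k) * ∏ i ∈ (Finset.range l).erase k, (1 - ε' i) :=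
        (Finset.mul_prod_erase _ _ (Finset.mem_range.mpr h)).symm
      have hkk : ε' k * (1 - ε' k) = 0 := by
        have h2 := hB (ε' k)
        rw [mul_sub, mul_one, h2, sub_self]
      calc g k * g l = (ε' k * (1 - ε' k)) *
            ((∏ i ∈ Finset.range k, (1 - ε' i)) *
              (ε' l * ∏ i ∈ (Finset.range l).erase k, (1 - ε' i))) := by
            rw [hg]
            simp only []
            rw [hsplit]
            ring
        _ = 0 := by rw [hkk, zero_mul]
    intro k l hkl
    rcases lt_or_gt_of_ne hkl with h | h
    · exact haux k l h
    · rw [mul_comm]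
      exact haux l k h
  set X : ℕ → Matrix (Fin n) (Fin n) B := fun k => A - MB k with hX
  have hgD : ∀ k, g k • (X k) ^ n = 0 := by
    intro k
    ext i j
    rw [Matrix.smul_apply, Matrix.zero_apply, smul_eq_mul]
    have hent : ((X k) ^ n) i j = D (idx k) i j := rfl
    rw [hent]
    by_cases hkK : k < K
    · have hεk : ε' k = ε (idx k) := by
        rw [hε']
        simp only []
        rw [if_pos hkK]
      have h0 : ε' k * D (idx k) i j = 0 := by rw [hεk]; exact hεD (idx k) i j
      calc g k * D (idx k) i j
          = (∏ i ∈ Finset.range k, (1 - ε' i)) * (ε' k * D (idx k) i j) := by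
            rw [hg]; ring
        _ = 0 := by rw [h0, mul_zero]
    · have hek : ε' k = 0 := by
        rw [hε']
        simp only []
        rw [if_neg hkK]
      rw [hg]
      simp only []
      rw [hek, zero_mul, zero_mul]
  set E : Matrix (Fin n) (Fin n) B := ∑ k ∈ Finset.range K, g k • MB k with hEdef
  have hprod : ∀ (k l : ℕ) (P R : Matrix (Fin n) (Fin n) B),
      (g k • P) * (g l • R) = (g k * g l) • (P * R) := by
    intro k l P R
    rw [Matrix.smul_mul, Matrix.mul_smul, smul_smul]
  have hdiag : ∀ (F G : ℕ → Matrix (Fin n) (Fin n) B),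
      (∑ k ∈ Finset.range K, g k • F k) * (∑ l ∈ Finset.range K, g l • G l)
        = ∑ k ∈ Finset.range K, (g k * g k) • (F k * G k) := by
    intro F G
    rw [Finset.sum_mul_sum]
    apply Finset.sum_congr rfl
    intro k hk
    rw [Finset.sum_eq_single k]
    · rw [hprod]
    · intro l _ hlk
      rw [hprod, horth k l (Ne.symm hlk), zero_smul]
    · intro hk'
      exact absurd hk hk'
  have hEidem : IsIdempotentElem E := by
    show E * E = E
    rw [hEdef, hdiag]
    apply Finset.sum_congr rfl
    intro k _
    rw [hB (g k), hMBidem]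
  set Q : Matrix (Fin n) (Fin n) B := A - E with hQdef
  have hQsum : Q = ∑ k ∈ Finset.range K, g k • X k := by
    rw [hQdef, hEdef, hX]
    have hs : (∑ k ∈ Finset.range K, g k • (A - MB k))
        = (∑ k ∈ Finset.range K, g k • A) - ∑ k ∈ Finset.range K, g k • MB k := by
      rw [← Finset.sum_sub_distrib]
      apply Finset.sum_congr rfl
      intros
      rw [smul_sub]
    rw [hs, ← Finset.sum_smul, hsum1, one_smul]
  have hQpow : ∀ m, 1 ≤ m → Q ^ m = ∑ k ∈ Finset.range K, g k • (X k) ^ m := by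
    intro m hm
    induction m with
    | zero => omega
    | succ m ih =>
      by_cases hm0 : m = 0
      · subst hm0
        rw [pow_one, hQsum]
        apply Finset.sum_congr rfl
        intros
        rw [pow_one]
      · rw [pow_succ, ih (by omega), hQsum, hdiag]
        apply Finset.sum_congr rfl
        intro k _
        rw [hB (g k), ← pow_succ]
  have hQn : Q ^ n = 0 := by
    rw [hQpow n hn]
    apply Finset.sum_eq_zero
    intro k _
    exact hgD k
  exact ⟨E, Q, hEidem, hQn, by rw [hQdef]; abel⟩

end NC

theorem stmt7 (R : Type*) [Ring R] (n : ℕ) (hn : 1 ≤ n)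
    (hbool : IsBooleanRing (TwoSidedIdeal.jacobson (⊥ : TwoSidedIdeal R)).ringCon.Quotient)
    (hnil : ∀ A : Matrix (Fin n) (Fin n) R,
      (∀ i j, A i j ∈ TwoSidedIdeal.jacobson (⊥ : TwoSidedIdeal R)) → IsNilpotent A) :
    IsNilCleanRing (Matrix (Fin n) (Fin n) R) := by
  classical
  intro A
  set J := TwoSidedIdeal.jacobson (⊥ : TwoSidedIdeal R) with hJ
  set π : R →+* J.ringCon.Quotient := J.ringCon.mk' with hπ
  have hker : ∀ x : R, π x = 0 ↔ x ∈ J := by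
    intro x
    have h0 : (0 : J.ringCon.Quotient) = π 0 := (map_zero π).symm
    constructor
    · intro h
      rw [h0] at h
      have hrel : J.ringCon x 0 := J.ringCon.eq.mp h
      exact (TwoSidedIdeal.mem_iff J x).mpr hrel
    · intro h
      rw [h0]
      exact J.ringCon.eq.mpr ((TwoSidedIdeal.mem_iff J x).mp h)
  have hπsurj : Function.Surjective π := fun y =>
    Quot.inductionOn y (fun x => ⟨x, rfl⟩)
  set Φ : Matrix (Fin n) (Fin n) R →+* Matrix (Fin n) (Fin n) J.ringCon.Quotient :=
    π.mapMatrix with hΦ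
  obtain ⟨Eb, Qb, hEb, hQbn, hAdec⟩ := NC.boolean_matrix_nilclean hbool (by omega) (Φ A)
  have hΦker : ∀ X ∈ RingHom.ker Φ, IsNilpotent X := by
    intro X hX
    apply hnil
    intro i j
    rw [← hker]
    have : Φ X = 0 := RingHom.mem_ker.mp hX
    calc π (X i j) = (Φ X) i j := rfl
      _ = 0 := by rw [this]; rfl
  have hEbrange : Eb ∈ Φ.range := by
    refine ⟨Matrix.of fun i j => Function.surjInv hπsurj (Eb i j), ?_⟩
    ext i j
    calc (Φ (Matrix.of fun i j => Function.surjInv hπsurj (Eb i j))) i j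
        = π (Function.surjInv hπsurj (Eb i j)) := rfl
      _ = Eb i j := Function.surjInv_eq hπsurj _
  obtain ⟨E, hEidem, hΦE⟩ :=
    exists_isIdempotentElem_eq_of_ker_isNilpotent Φ hΦker Eb hEbrange hEb
  refine ⟨E, A - E, hEidem, ?_, by abel⟩
  have hΦQ : Φ (A - E) = Qb := by
    rw [map_sub, hΦE, hAdec]
    abel
  have hQnJ : ∀ i j, ((A - E) ^ n) i j ∈ J := by
    intro i j
    rw [← hker]
    calc π (((A - E) ^ n) i j) = (Φ ((A - E) ^ n)) i j := rfl
      _ = ((Φ (A - E)) ^ n) i j := by rw [map_pow]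
      _ = (0 : Matrix (Fin n) (Fin n) J.ringCon.Quotient) i j := by rw [hΦQ, hQbn]
      _ = 0 := rfl
  obtain ⟨m, hm⟩ := hnil _ hQnJ
  exact ⟨n * m, by rw [pow_mul]; exact hm⟩
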